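/- Let A and B be positive definite d×d complex matrices. Then BA^{-1} has positive real eigenvalues, and log λ↓(B) − log λ↓(A) ≺ log λ(BA^{-1}) ≺ log λ↓(B) − log λ↑(A), where log is applied entrywise and ≺ denotes majorization. -/

import Mathlib

open Matrix Polynomial
open scoped ComplexOrder

/-- The vector `x` rearranged in non-increasing order. -/
noncomputable def sortDesc {d : ℕ} (x : Fin d → ℝ) : Fin d → ℝ :=
  fun i => x (Tuple.sort x i.rev)

/-- The vector `x` rearranged in non-decreasing order. -/
noncomputable def sortAsc {d : ℕ} (x : Fin d → ℝ) : Fin d → ℝ :=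
  fun i => x (Tuple.sort x i)

/-- `x` is submajorized by `y`. -/
noncomputable def Submajorizes {d : ℕ} (x y : Fin d → ℝ) : Prop :=
  ∀ k : Fin d, ∑ i ∈ Finset.Iic k, sortDesc x i ≤ ∑ i ∈ Finset.Iic k, sortDesc y i

/-- `x` is majorized by `y`. -/
noncomputable def Majorizes {d : ℕ} (x y : Fin d → ℝ) : Prop :=
  Submajorizes x y ∧ ∑ i, x i = ∑ i, y i

namespace GNL
open Finset
variable {d : ℕ}

/-! ### Sorting helpers -/

lemma sortAsc_mono (x : Fin d → ℝ) : Monotone (sortAsc x) := Tuple.monotone_sort x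

lemma sortDesc_eq_sortAsc (x : Fin d → ℝ) (i : Fin d) : sortDesc x i = sortAsc x i.rev := rfl

lemma sortDesc_anti (x : Fin d → ℝ) : Antitone (sortDesc x) := by
  intro i j hij
  exact sortAsc_mono x (by simpa [Fin.rev_le_rev] using hij)

/-- the permutation whose composition with `x` gives `sortDesc x` -/
noncomputable def descPerm (x : Fin d → ℝ) : Equiv.Perm (Fin d) :=
  (Fin.revPerm).trans (Tuple.sort x)

lemma sortDesc_eq_comp (x : Fin d → ℝ) : sortDesc x = x ∘ (descPerm x) := rfl

lemma sortAsc_eq_of_monotone (x : Fin d → ℝ) (σ : Equiv.Perm (Fin d))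
    (h : Monotone (x ∘ σ)) : sortAsc x = x ∘ σ :=
  (Tuple.comp_sort_eq_comp_iff_monotone.2 h).symm

lemma sortAsc_eq_of_perm {u v : Fin d → ℝ} (h : (List.ofFn u).Perm (List.ofFn v)) :
    sortAsc u = sortAsc v := by
  haveI : IsAntisymm ℝ (· ≤ ·) := ⟨fun _ _ => le_antisymm⟩
  apply List.ofFn_injective
  refine (fun h1 h2 h3 => List.Perm.eq_of_sortedLE h2 h3 h1) ?_ ?_ ?_
  · have h1 : List.ofFn (sortAsc u) = List.ofFn (u ∘ Tuple.sort u) := rfl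
    have h2 : List.ofFn (sortAsc v) = List.ofFn (v ∘ Tuple.sort v) := rfl
    rw [h1, h2]
    exact ((Equiv.Perm.ofFn_comp_perm _ u).trans h).trans (Equiv.Perm.ofFn_comp_perm _ v).symm
  · exact List.sortedLE_ofFn_iff.2 (sortAsc_mono u)
  · exact List.sortedLE_ofFn_iff.2 (sortAsc_mono v)

lemma sortDesc_eq_of_perm {u v : Fin d → ℝ} (h : (List.ofFn u).Perm (List.ofFn v)) :
    sortDesc u = sortDesc v := by
  funext i; rw [sortDesc_eq_sortAsc, sortDesc_eq_sortAsc, sortAsc_eq_of_perm h]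

lemma sortDesc_of_antitone {x : Fin d → ℝ} (h : Antitone x) : sortDesc x = x := by
  have h1 : sortAsc x = x ∘ (Fin.revPerm : Equiv.Perm (Fin d)) := by
    apply sortAsc_eq_of_monotone
    intro i j hij
    exact h (by simpa [Fin.rev_le_rev] using hij)
  funext i
  rw [sortDesc_eq_sortAsc, h1]
  simp

lemma sum_comp_sortDesc (g : ℝ → ℝ) (x : Fin d → ℝ) :
    ∑ i, g (sortDesc x i) = ∑ j, g (x j) := by
  have : ∀ i, g (sortDesc x i) = (g ∘ x) (descPerm x i) := fun i => rfl
  simp_rw [this]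
  exact Equiv.sum_comp (descPerm x) (g ∘ x)

lemma sum_comp_sortAsc (g : ℝ → ℝ) (x : Fin d → ℝ) :
    ∑ i, g (sortAsc x i) = ∑ j, g (x j) := by
  have : ∀ i, g (sortAsc x i) = (g ∘ x) (Tuple.sort x i) := fun i => rfl
  simp_rw [this]
  exact Equiv.sum_comp (Tuple.sort x) (g ∘ x)

/-! ### sums over subsets vs top-k sums -/

lemma antitone_sum_le (g : Fin d → ℝ) (hg : Antitone g) (k : Fin d) (T : Finset (Fin d))
    (hT : T.card = k.val + 1) : ∑ i ∈ T, g i ≤ ∑ i ∈ Finset.Iic k, g i := by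
  have hkd : k.val + 1 ≤ d := k.isLt
  set f : Fin (k.val+1) → Fin d := fun j => (T.orderIsoOfFin hT j : Fin d) with hf
  have hfmono : StrictMono f := fun a b hab => (T.orderIsoOfFin hT).strictMono hab
  have key : ∀ j : Fin (k.val+1), (j : ℕ) ≤ (f j : ℕ) := by
    intro j
    induction j using Fin.induction with
    | zero => exact Nat.zero_le _
    | succ j ih =>
      have h1 : (f j.castSucc : ℕ) < (f j.succ : ℕ) := hfmono (Fin.castSucc_lt_succ (i := j))
      have h2 : (j.castSucc : ℕ) = (j : ℕ) := rfl
      simp only [Fin.val_succ]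
      omega
  have hTimg : T = Finset.image f Finset.univ := by
    refine (Finset.eq_of_subset_of_card_le ?_ ?_).symm
    · intro i hi
      simp only [Finset.mem_image] at hi
      obtain ⟨j, _, rfl⟩ := hi
      exact (T.orderIsoOfFin hT j).2
    · rw [Finset.card_image_of_injective _ hfmono.injective]
      simp [hT]
  have hIic : Finset.Iic k = Finset.image (fun j : Fin (k.val+1) => Fin.castLE hkd j)
      Finset.univ := by
    ext i
    simp only [Finset.mem_Iic, Finset.mem_image, Finset.mem_univ, true_and]
    constructor
    · intro hi
      refine ⟨⟨i.val, by omega⟩, ?_⟩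
      · ext; rfl
    · rintro ⟨j, rfl⟩
      have : (j : ℕ) ≤ k.val := Nat.lt_succ_iff.mp j.isLt
      exact this
  rw [hTimg, hIic, Finset.sum_image (fun a _ b _ h => hfmono.injective h),
    Finset.sum_image (fun a _ b _ h => Fin.castLE_injective hkd h)]
  apply Finset.sum_le_sum
  intro j _
  exact hg (by rw [Fin.le_def]; exact key j)

lemma sum_subset_le_sortDesc (x : Fin d → ℝ) (k : Fin d) (S : Finset (Fin d))
    (hS : S.card = k.val + 1) : ∑ i ∈ S, x i ≤ ∑ i ∈ Finset.Iic k, sortDesc x i := by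
  have h1 : ∑ i ∈ S, x i = ∑ j ∈ S.map (descPerm x).symm.toEmbedding, sortDesc x j := by
    rw [Finset.sum_map]
    apply Finset.sum_congr rfl
    intro i _
    rw [sortDesc_eq_comp]
    simp
  rw [h1]
  exact antitone_sum_le _ (sortDesc_anti x) k _ (by rw [Finset.card_map, hS])

lemma sortDesc_sum_eq_subset (x : Fin d → ℝ) (k : Fin d) :
    ∃ T : Finset (Fin d), T.card = k.val + 1 ∧
      ∑ i ∈ Finset.Iic k, sortDesc x i = ∑ i ∈ T, x i := by
  refine ⟨(Finset.Iic k).map (descPerm x).toEmbedding, ?_, ?_⟩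
  · rw [Finset.card_map, Fin.card_Iic]
  · rw [Finset.sum_map]
    apply Finset.sum_congr rfl
    intro i _
    rfl

/-! ### charpoly helpers -/

lemma charpoly_diag (v : Fin d → ℂ) :
    (Matrix.diagonal v).charpoly = ∏ i, (X - C (v i)) := by
  unfold Matrix.charpoly
  have h : charmatrix (Matrix.diagonal v) = Matrix.diagonal (fun i => (X : ℂ[X]) - C (v i)) := by
    ext i j
    by_cases h : i = j
    · subst h; rw [charmatrix_apply_eq, Matrix.diagonal_apply_eq, Matrix.diagonal_apply_eq]
    · rw [charmatrix_apply_ne _ _ _ h, Matrix.diagonal_apply_ne _ h,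
        Matrix.diagonal_apply_ne _ h, map_zero, neg_zero]
  rw [h, Matrix.det_diagonal]

lemma charpoly_conj {P Q M : Matrix (Fin d) (Fin d) ℂ} (hPQ : P * Q = 1) (hQP : Q * P = 1) :
    (P * M * Q).charpoly = M.charpoly := by
  unfold Matrix.charpoly
  have hch : charmatrix (P * M * Q) =
      P.map (C : ℂ →+* ℂ[X]) * charmatrix M * Q.map (C : ℂ →+* ℂ[X]) := by
    unfold charmatrix
    rw [RingHom.mapMatrix_apply, RingHom.mapMatrix_apply, mul_sub, sub_mul]
    congr 1
    · have hsc : P.map (C : ℂ →+* ℂ[X]) * Matrix.scalar (Fin d) (X : ℂ[X])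
          = Matrix.scalar (Fin d) (X : ℂ[X]) * P.map (C : ℂ →+* ℂ[X]) :=
        (Matrix.scalar_commute (X : ℂ[X]) (fun r => Commute.all _ r) _).symm
      rw [hsc, mul_assoc, ← Matrix.map_mul, hPQ, Matrix.map_one _ (map_zero _) (map_one _),
        mul_one]
    · rw [← Matrix.map_mul, ← Matrix.map_mul]
  rw [hch, Matrix.det_mul, Matrix.det_mul, mul_comm, ← mul_assoc, ← Matrix.det_mul,
    ← Matrix.map_mul, hQP, Matrix.map_one _ (map_zero _) (map_one _), Matrix.det_one, one_mul]

/-! ### Rayleigh quotient computations -/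

lemma quad_eq_sum {M : Matrix (Fin d) (Fin d) ℂ} (hM : M.IsHermitian) (v : Fin d → ℂ) :
    star v ⬝ᵥ (M *ᵥ v) =
      ((∑ j, hM.eigenvalues j *
        Complex.normSq ((star (hM.eigenvectorUnitary : Matrix (Fin d) (Fin d) ℂ) *ᵥ v) j) : ℝ) : ℂ) := by
  set U : Matrix (Fin d) (Fin d) ℂ := (hM.eigenvectorUnitary : Matrix (Fin d) (Fin d) ℂ) with hU
  set w : Fin d → ℂ := star U *ᵥ v with hw
  have h1 : star v ⬝ᵥ (M *ᵥ v) = star w ⬝ᵥ ((Matrix.diagonal (RCLike.ofReal ∘ hM.eigenvalues)) *ᵥ w) := by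
    conv_lhs => rw [hM.spectral_theorem, Unitary.conjStarAlgAut_apply]
    rw [← mulVec_mulVec, ← mulVec_mulVec, dotProduct_mulVec]
    congr 1
    rw [hw, star_mulVec, star_eq_conjTranspose, conjTranspose_conjTranspose]
  rw [h1]
  rw [dotProduct]
  push_cast
  apply Finset.sum_congr rfl
  intro j _
  rw [mulVec_diagonal]
  have : (starRingEnd ℂ) (w j) * w j = (Complex.normSq (w j) : ℂ) := by
    rw [mul_comm, Complex.mul_conj]
  simp only [Pi.star_apply, RCLike.star_def, Function.comp_apply]
  rw [mul_comm ((RCLike.ofReal (hM.eigenvalues j)) : ℂ) (w j), ← mul_assoc, this]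
  push_cast
  exact mul_comm _ _

lemma norm_eq_sum {M : Matrix (Fin d) (Fin d) ℂ} (hM : M.IsHermitian) (v : Fin d → ℂ) :
    ∑ j, Complex.normSq ((star (hM.eigenvectorUnitary : Matrix (Fin d) (Fin d) ℂ) *ᵥ v) j)
      = ∑ i, Complex.normSq (v i) := by
  set U : Matrix (Fin d) (Fin d) ℂ := (hM.eigenvectorUnitary : Matrix (Fin d) (Fin d) ℂ) with hU
  set w : Fin d → ℂ := star U *ᵥ v with hw
  have h1 : star w ⬝ᵥ w = star v ⬝ᵥ v := by
    rw [hw, star_mulVec, star_eq_conjTranspose, conjTranspose_conjTranspose, ← dotProduct_mulVec,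
      mulVec_mulVec, ← star_eq_conjTranspose,
      (Matrix.mem_unitaryGroup_iff).mp hM.eigenvectorUnitary.2, one_mulVec]
  have h2 : ∀ u : Fin d → ℂ, star u ⬝ᵥ u = ((∑ i, Complex.normSq (u i) : ℝ) : ℂ) := by
    intro u
    rw [dotProduct]
    push_cast
    apply Finset.sum_congr rfl
    intro j _
    simp only [Pi.star_apply, RCLike.star_def]
    rw [mul_comm, Complex.mul_conj]
  rw [h2, h2] at h1
  exact_mod_cast h1

lemma weyl_mono {X Y : Matrix (Fin d) (Fin d) ℂ} (hX : X.IsHermitian) (hY : Y.IsHermitian)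
    (hXY : (Y - X).PosSemidef) (k : Fin d) :
    sortDesc hX.eigenvalues k ≤ sortDesc hY.eigenvalues k := by
  classical
  set x := hX.eigenvalues with hx
  set y := hY.eigenvalues with hy
  set t := sortDesc x k with ht
  set s := sortDesc y k with hs
  set UX : Matrix (Fin d) (Fin d) ℂ := (hX.eigenvectorUnitary : Matrix (Fin d) (Fin d) ℂ) with hUX
  set UY : Matrix (Fin d) (Fin d) ℂ := (hY.eigenvectorUnitary : Matrix (Fin d) (Fin d) ℂ) with hUY
  set J : Finset (Fin d) := Finset.univ.filter (fun j => t ≤ x j) with hJdef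
  set K : Finset (Fin d) := Finset.univ.filter (fun j => y j ≤ s) with hKdef
  have hJ : k.val + 1 ≤ J.card := by
    have hsub : (Finset.Iic k).image (descPerm x) ⊆ J := by
      intro j hj
      obtain ⟨i, hi, rfl⟩ := Finset.mem_image.mp hj
      refine Finset.mem_filter.mpr ⟨Finset.mem_univ _, ?_⟩
      have : sortDesc x k ≤ sortDesc x i := sortDesc_anti x (Finset.mem_Iic.mp hi)
      rw [sortDesc_eq_comp] at this
      exact this
    calc k.val + 1 = ((Finset.Iic k).image (descPerm x)).card := by
          rw [Finset.card_image_of_injective _ (descPerm x).injective, Fin.card_Iic]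
      _ ≤ J.card := Finset.card_le_card hsub
  have hK : d - k.val ≤ K.card := by
    have hsub : (Finset.Ici k).image (descPerm y) ⊆ K := by
      intro j hj
      obtain ⟨i, hi, rfl⟩ := Finset.mem_image.mp hj
      refine Finset.mem_filter.mpr ⟨Finset.mem_univ _, ?_⟩
      have : sortDesc y i ≤ sortDesc y k := sortDesc_anti y (Finset.mem_Ici.mp hi)
      rw [sortDesc_eq_comp] at this
      exact this
    calc d - k.val = ((Finset.Ici k).image (descPerm y)).card := by
          rw [Finset.card_image_of_injective _ (descPerm y).injective, Fin.card_Ici]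
      _ ≤ K.card := Finset.card_le_card hsub
  -- linear maps whose kernels are the spectral subspaces
  set LX : (Fin d → ℂ) →ₗ[ℂ] ({j // j ∈ (Jᶜ : Finset (Fin d))} → ℂ) :=
    (LinearMap.funLeft ℂ ℂ (fun j : {j // j ∈ (Jᶜ : Finset (Fin d))} => (j : Fin d))).comp
      (Matrix.mulVecLin (star UX)) with hLX
  set LY : (Fin d → ℂ) →ₗ[ℂ] ({j // j ∈ (Kᶜ : Finset (Fin d))} → ℂ) :=
    (LinearMap.funLeft ℂ ℂ (fun j : {j // j ∈ (Kᶜ : Finset (Fin d))} => (j : Fin d))).comp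
      (Matrix.mulVecLin (star UY)) with hLY
  set V := LinearMap.ker LX with hV
  set W := LinearMap.ker LY with hW
  have hrankV : J.card ≤ Module.finrank ℂ V := by
    rw [hV]
    have h1 := LinearMap.finrank_range_add_finrank_ker LX
    have h2 : Module.finrank ℂ (LinearMap.range LX) ≤ (Jᶜ : Finset (Fin d)).card := by
      refine (Submodule.finrank_le (LinearMap.range LX)).trans_eq ?_
      rw [Module.finrank_pi]
      exact Fintype.card_coe _
    have h3 : Module.finrank ℂ (Fin d → ℂ) = d := by rw [Module.finrank_pi, Fintype.card_fin]
    have h4 : (Jᶜ : Finset (Fin d)).card = d - J.card := by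
      rw [Finset.card_compl, Fintype.card_fin]
    have h5 : J.card ≤ d := J.card_le_univ.trans_eq (by simp)
    omega
  have hrankW : K.card ≤ Module.finrank ℂ W := by
    rw [hW]
    have h1 := LinearMap.finrank_range_add_finrank_ker LY
    have h2 : Module.finrank ℂ (LinearMap.range LY) ≤ (Kᶜ : Finset (Fin d)).card := by
      refine (Submodule.finrank_le (LinearMap.range LY)).trans_eq ?_
      rw [Module.finrank_pi]
      exact Fintype.card_coe _
    have h3 : Module.finrank ℂ (Fin d → ℂ) = d := by rw [Module.finrank_pi, Fintype.card_fin]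
    have h4 : (Kᶜ : Finset (Fin d)).card = d - K.card := by
      rw [Finset.card_compl, Fintype.card_fin]
    have h5 : K.card ≤ d := K.card_le_univ.trans_eq (by simp)
    omega
  have hinter : V ⊓ W ≠ ⊥ := by
    intro hbot
    have h1 := Submodule.finrank_sup_add_finrank_inf_eq V W
    have h2 : Module.finrank ℂ ↥(V ⊔ W) ≤ d := by
      refine (Submodule.finrank_le _).trans_eq ?_
      rw [Module.finrank_pi, Fintype.card_fin]
    rw [hbot, finrank_bot] at h1
    have hkd : k.val < d := k.isLt
    omega
  obtain ⟨v, hvVW, hvne⟩ := (Submodule.ne_bot_iff _).mp hinter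
  have hvV : v ∈ V := hvVW.1
  have hvW : v ∈ W := hvVW.2
  -- kernel conditions
  have hkerX : ∀ j : Fin d, j ∉ J → (star UX *ᵥ v) j = 0 := by
    intro j hj
    have := LinearMap.mem_ker.mp hvV
    have := congrFun this ⟨j, Finset.mem_compl.mpr hj⟩
    simpa [hLX, LinearMap.funLeft] using this
  have hkerY : ∀ j : Fin d, j ∉ K → (star UY *ᵥ v) j = 0 := by
    intro j hj
    have := LinearMap.mem_ker.mp hvW
    have := congrFun this ⟨j, Finset.mem_compl.mpr hj⟩
    simpa [hLY, LinearMap.funLeft] using this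
  -- quadratic bounds
  set n2 : ℝ := ∑ i, Complex.normSq (v i) with hn2
  have hn2pos : 0 < n2 := by
    obtain ⟨i, hi⟩ := Function.ne_iff.mp hvne
    refine Finset.sum_pos' (fun j _ => Complex.normSq_nonneg _) ⟨i, Finset.mem_univ _, ?_⟩
    exact Complex.normSq_pos.mpr hi
  set qX : ℝ := ∑ j, x j * Complex.normSq ((star UX *ᵥ v) j) with hqX
  set qY : ℝ := ∑ j, y j * Complex.normSq ((star UY *ᵥ v) j) with hqY
  have bound1 : t * n2 ≤ qX := by
    rw [hn2, ← norm_eq_sum hX v, Finset.mul_sum]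
    apply Finset.sum_le_sum
    intro j _
    by_cases hj : j ∈ J
    · have : t ≤ x j := (Finset.mem_filter.mp hj).2
      exact mul_le_mul_of_nonneg_right this (Complex.normSq_nonneg _)
    · rw [hkerX j hj]
      simp
  have bound2 : qY ≤ s * n2 := by
    rw [hn2, ← norm_eq_sum hY v, Finset.mul_sum]
    apply Finset.sum_le_sum
    intro j _
    by_cases hj : j ∈ K
    · have : y j ≤ s := (Finset.mem_filter.mp hj).2
      exact mul_le_mul_of_nonneg_right this (Complex.normSq_nonneg _)
    · rw [hkerY j hj]
      simp
  have bound3 : qX ≤ qY := by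
    have h0 : (0:ℂ) ≤ star v ⬝ᵥ ((Y - X) *ᵥ v) := hXY.dotProduct_mulVec_nonneg v
    have heq : star v ⬝ᵥ ((Y - X) *ᵥ v) = ((qY - qX : ℝ) : ℂ) := by
      rw [sub_mulVec, dotProduct_sub, quad_eq_sum hX v, quad_eq_sum hY v, hqY, hqX]
      push_cast
      ring
    rw [heq] at h0
    have := (Complex.zero_le_real (x := qY - qX)).mp h0
    linarith
  have : t * n2 ≤ s * n2 := le_trans bound1 (le_trans bound3 bound2)
  exact le_of_mul_le_mul_right (by linarith [this]) hn2pos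

/-! ### eigenvalues of conjugated diagonal matrices -/

lemma roots_prod (g : Fin d → ℝ) :
    (∏ i, (X - C ((g i : ℝ) : ℂ))).roots = (↑(List.ofFn (fun i => ((g i : ℝ) : ℂ))) : Multiset ℂ) := by
  have h1 : ∏ i, (X - C ((g i :ℝ) : ℂ)) =
      (Multiset.map (fun a => X - C a) (↑(List.ofFn (fun i => ((g i : ℝ) : ℂ))) : Multiset ℂ)).prod := by
    rw [Multiset.map_coe, List.map_ofFn, Multiset.prod_coe, List.prod_ofFn]
    rfl
  rw [h1, roots_multiset_prod_X_sub_C]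

lemma eig_perm {U : Matrix (Fin d) (Fin d) ℂ} (hU : U ∈ Matrix.unitaryGroup (Fin d) ℂ)
    (f : Fin d → ℝ)
    (hM : (U * Matrix.diagonal (Complex.ofReal ∘ f) * star U).IsHermitian) :
    (List.ofFn hM.eigenvalues).Perm (List.ofFn f) := by
  have hUs : U * star U = 1 := mem_unitaryGroup_iff.mp hU
  have hsU : star U * U = 1 := mem_unitaryGroup_iff'.mp hU
  have h1 : (U * Matrix.diagonal (Complex.ofReal ∘ f) * star U).charpoly
      = ∏ i, (X - C ((f i : ℝ) : ℂ)) := by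
    rw [charpoly_conj hUs hsU, charpoly_diag]
    rfl
  have h2 : (U * Matrix.diagonal (Complex.ofReal ∘ f) * star U).charpoly
      = ∏ i, (X - C ((hM.eigenvalues i : ℝ) : ℂ)) := by
    conv_lhs => rw [hM.spectral_theorem, Unitary.conjStarAlgAut_apply]
    rw [charpoly_conj (mem_unitaryGroup_iff.mp hM.eigenvectorUnitary.2)
      (mem_unitaryGroup_iff'.mp hM.eigenvectorUnitary.2), charpoly_diag]
    rfl
  have h4 : ((↑(List.ofFn (fun i => ((hM.eigenvalues i : ℝ) : ℂ)))) : Multiset ℂ)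
      = (↑(List.ofFn (fun i => ((f i : ℝ) : ℂ))) : Multiset ℂ) := by
    rw [← roots_prod, ← roots_prod, ← h1, ← h2]
  have h5 : Multiset.map (fun r : ℝ => (r : ℂ)) (↑(List.ofFn hM.eigenvalues))
      = Multiset.map (fun r : ℝ => (r : ℂ)) (↑(List.ofFn f)) := by
    rw [Multiset.map_coe, Multiset.map_coe, List.map_ofFn, List.map_ofFn]
    exact_mod_cast h4
  have h6 := Multiset.map_injective (fun a b h => Complex.ofReal_injective h) h5
  exact Multiset.coe_eq_coe.mp h6

lemma det_conj_diag {U : Matrix (Fin d) (Fin d) ℂ} (hU : U ∈ Matrix.unitaryGroup (Fin d) ℂ)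
    (v : Fin d → ℂ) : Matrix.det (U * Matrix.diagonal v * star U) = ∏ i, v i := by
  have hsU : star U * U = 1 := mem_unitaryGroup_iff'.mp hU
  rw [det_mul, det_mul]
  have : U.det * (Matrix.diagonal v).det * (star U).det
      = (Matrix.diagonal v).det * ((star U).det * U.det) := by ring
  rw [this, ← det_mul, hsU, det_one, mul_one, det_diagonal]

lemma eig_eq_of_eq {M N : Matrix (Fin d) (Fin d) ℂ} (h : M = N) (hM : M.IsHermitian)
    (hN : N.IsHermitian) : hM.eigenvalues = hN.eigenvalues := by
  subst h; rfl

/-! ### PosDef conjugation -/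

lemma posDef_conj {B R : Matrix (Fin d) (Fin d) ℂ} (hB : B.PosDef) (hR : R.IsHermitian)
    (hRdet : IsUnit R.det) : (R * B * R).PosDef := by
  have hinj : Function.Injective (R.mulVec) :=
    mulVec_injective_iff_isUnit.mpr ((isUnit_iff_isUnit_det R).mpr hRdet)
  refine PosDef.of_dotProduct_mulVec_pos ?_ ?_
  · have := isHermitian_mul_mul_conjTranspose R hB.isHermitian
    rwa [hR.eq] at this
  · intro x hx
    have hRx : R *ᵥ x ≠ 0 := fun h => hx (hinj (by rw [h, mulVec_zero]))
    have := hB.dotProduct_mulVec_pos hRx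
    have heq : star x ⬝ᵥ ((R * B * R) *ᵥ x) = star (R *ᵥ x) ⬝ᵥ (B *ᵥ (R *ᵥ x)) := by
      rw [star_mulVec, hR.eq, ← mulVec_mulVec, ← mulVec_mulVec, dotProduct_mulVec]
    rw [heq]
    exact this

/-! ### the core Gelfand–Naimark–Lidskii inequality -/


lemma diag_ofReal_smul (t : ℝ) (a : Fin d → ℝ) :
    ((t:ℂ) • Matrix.diagonal (Complex.ofReal ∘ a)) =
      Matrix.diagonal (Complex.ofReal ∘ fun j => t * a j) := by
  ext i j
  by_cases h : i = j
  · subst h; simp [Matrix.diagonal_apply_eq]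
  · simp [Matrix.diagonal_apply_ne _ h]

lemma conj_smul_one {U : Matrix (Fin d) (Fin d) ℂ} (hUs : U * star U = 1) (c : ℂ) :
    U * (c • (1 : Matrix (Fin d) (Fin d) ℂ)) * star U = c • (1 : Matrix (Fin d) (Fin d) ℂ) := by
  rw [mul_smul_comm, mul_one, smul_mul_assoc, hUs]

lemma diag_const_smul_one (c : ℂ) :
    Matrix.diagonal (fun _ : Fin d => c) = c • (1 : Matrix (Fin d) (Fin d) ℂ) := by
  ext i j
  by_cases h : i = j
  · subst h; simp
  · simp [Matrix.diagonal_apply_ne _ h, Matrix.one_apply_ne h]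

lemma sortDesc_smul {t : ℝ} (ht : 0 ≤ t) (a : Fin d → ℝ) :
    sortDesc (fun j => t * a j) = fun i => t * sortDesc a i := by
  have h1 : sortAsc (fun j => t * a j) = (fun j => t * a j) ∘ (Tuple.sort a) := by
    apply sortAsc_eq_of_monotone
    intro i j hij
    exact mul_le_mul_of_nonneg_left (sortAsc_mono a hij) ht
  funext i
  rw [sortDesc_eq_sortAsc, h1]
  rfl

lemma gnl_core {A B C Q : Matrix (Fin d) (Fin d) ℂ} (hA : A.PosDef) (hB : B.PosDef)
    (hC : C.PosDef) (hQ : Q.IsHermitian) (hQC : Q * C * Q = B) (hQQ : Q * Q = A)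
    (k : Fin d) (S : Finset (Fin d)) (hS : S.card = k.val + 1) :
    ∑ i ∈ S, (Real.log (sortDesc hB.isHermitian.eigenvalues i)
      - Real.log (sortDesc hA.isHermitian.eigenvalues i))
      ≤ ∑ i ∈ Finset.Iic k, Real.log (sortDesc hC.isHermitian.eigenvalues i) := by
  classical
  set x : Fin d → ℝ := hC.isHermitian.eigenvalues with hx
  set U : Matrix (Fin d) (Fin d) ℂ := (hC.isHermitian.eigenvectorUnitary : Matrix (Fin d) (Fin d) ℂ) with hU
  have hUmem : U ∈ Matrix.unitaryGroup (Fin d) ℂ := hC.isHermitian.eigenvectorUnitary.2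
  have hUs : U * star U = 1 := mem_unitaryGroup_iff.mp hUmem
  set μ : Fin d → ℝ := sortDesc x with hμ
  have hμpos : ∀ i, 0 < μ i := fun i => hC.eigenvalues_pos _
  set t : ℝ := μ k with htdef
  have ht : 0 < t := hμpos k
  have hxpos : ∀ j, 0 < x j := fun j => hC.eigenvalues_pos j
  set g : Fin d → ℝ := fun j => max (x j) t with hg
  have hgpos : ∀ j, 0 < g j := fun j => lt_max_of_lt_left (hxpos j)
  set Cp : Matrix (Fin d) (Fin d) ℂ := U * Matrix.diagonal (Complex.ofReal ∘ g) * star U with hCp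
  have hCpPSD : Cp.PosSemidef := by
    have hD : (Matrix.diagonal (Complex.ofReal ∘ g)).PosSemidef :=
      posSemidef_diagonal_iff.mpr (fun i => by
        rw [Function.comp_apply]
        exact_mod_cast Complex.zero_le_real.mpr (hgpos i).le)
    have := hD.mul_mul_conjTranspose_same U
    rwa [← star_eq_conjTranspose] at this
  have hCspec : C = U * Matrix.diagonal (Complex.ofReal ∘ x) * star U :=
    hC.isHermitian.spectral_theorem
  have hconjdiag : ∀ f₁ f₂ : Fin d → ℝ,
      U * Matrix.diagonal (Complex.ofReal ∘ f₁) * star U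
        - U * Matrix.diagonal (Complex.ofReal ∘ f₂) * star U
      = U * Matrix.diagonal (Complex.ofReal ∘ fun j => f₁ j - f₂ j) * star U := by
    intro f₁ f₂
    have harg : (fun i => (Complex.ofReal ∘ f₁) i - (Complex.ofReal ∘ f₂) i)
        = Complex.ofReal ∘ fun j => f₁ j - f₂ j := by
      funext j
      simp
    rw [← sub_mul, ← mul_sub, Matrix.diagonal_sub, harg]
  have hdiagPSD : ∀ f : Fin d → ℝ, (∀ j, 0 ≤ f j) →
      (U * Matrix.diagonal (Complex.ofReal ∘ f) * star U).PosSemidef := by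
    intro f hf
    have hD : (Matrix.diagonal (Complex.ofReal ∘ f)).PosSemidef :=
      posSemidef_diagonal_iff.mpr (fun i => by
        rw [Function.comp_apply]
        exact_mod_cast Complex.zero_le_real.mpr (hf i))
    have := hD.mul_mul_conjTranspose_same U
    rwa [← star_eq_conjTranspose] at this
  have hCpC : (Cp - C).PosSemidef := by
    rw [hCp, hCspec, hconjdiag]
    exact hdiagPSD _ (fun j => by simp [hg])
  have hCpt : (Cp - (t:ℂ) • (1 : Matrix (Fin d) (Fin d) ℂ)).PosSemidef := by
    have h1 : (t:ℂ) • (1 : Matrix (Fin d) (Fin d) ℂ)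
        = U * Matrix.diagonal (Complex.ofReal ∘ fun _ : Fin d => t) * star U := by
      have h2 : Matrix.diagonal (Complex.ofReal ∘ fun _ : Fin d => t)
          = (t:ℂ) • (1 : Matrix (Fin d) (Fin d) ℂ) := diag_const_smul_one _
      rw [h2, conj_smul_one hUs]
    rw [hCp, h1, hconjdiag]
    exact hdiagPSD _ (fun j => by simp [hg, le_max_right])
  set Bp : Matrix (Fin d) (Fin d) ℂ := Q * Cp * Q with hBpdef
  have hconjQ : ∀ M : Matrix (Fin d) (Fin d) ℂ, M.PosSemidef → (Q * M * Q).PosSemidef := by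
    intro M hM
    have := hM.mul_mul_conjTranspose_same Q
    rwa [hQ.eq] at this
  have hBpB : (Bp - B).PosSemidef := by
    have h1 : Bp - B = Q * (Cp - C) * Q := by
      rw [mul_sub, sub_mul, hQC]
    rw [h1]
    exact hconjQ _ hCpC
  have hBptA : (Bp - (t:ℂ) • A).PosSemidef := by
    have h1 : Bp - (t:ℂ) • A = Q * (Cp - (t:ℂ) • (1 : Matrix (Fin d) (Fin d) ℂ)) * Q := by
      rw [mul_sub, sub_mul]
      congr 1
      rw [mul_smul_comm, mul_one, smul_mul_assoc, hQQ]
    rw [h1]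
    exact hconjQ _ hCpt
  have hBp : Bp.PosDef := by
    have h1 := hB.add_posSemidef hBpB
    have h2 : B + (Bp - B) = Bp := by abel
    rwa [h2] at h1
  -- the scaled matrix t • A
  have htA : ((t:ℂ) • A).IsHermitian := by
    show ((t:ℂ) • A)ᴴ = (t:ℂ) • A
    rw [conjTranspose_smul, hA.isHermitian.eq, Complex.star_def, Complex.conj_ofReal]
  -- sorted eigenvalues of t • A
  set a : Fin d → ℝ := hA.isHermitian.eigenvalues with ha
  have hapos : ∀ j, 0 < a j := fun j => hA.eigenvalues_pos j
  have heig_tA : sortDesc htA.eigenvalues = fun i => t * sortDesc a i := by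
    set UA : Matrix (Fin d) (Fin d) ℂ := (hA.isHermitian.eigenvectorUnitary : Matrix (Fin d) (Fin d) ℂ) with hUA
    have hform : (t:ℂ) • A = UA * Matrix.diagonal (Complex.ofReal ∘ fun j => t * a j) * star UA := by
      conv_lhs => rw [hA.isHermitian.spectral_theorem]
      rw [← diag_ofReal_smul t a, mul_smul_comm, smul_mul_assoc]
      rfl
    have hM2 : (UA * Matrix.diagonal (Complex.ofReal ∘ fun j => t * a j) * star UA).IsHermitian :=
      hform ▸ htA
    have hperm := eig_perm hA.isHermitian.eigenvectorUnitary.2 (fun j => t * a j) hM2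
    have heq : htA.eigenvalues = hM2.eigenvalues := eig_eq_of_eq hform htA hM2
    rw [heq, sortDesc_eq_of_perm hperm, sortDesc_smul ht.le]
  -- Weyl monotonicity
  have e1 : ∀ i, sortDesc hB.isHermitian.eigenvalues i ≤ sortDesc hBp.isHermitian.eigenvalues i :=
    fun i => weyl_mono hB.isHermitian hBp.isHermitian hBpB i
  have e2 : ∀ i, t * sortDesc a i ≤ sortDesc hBp.isHermitian.eigenvalues i := by
    intro i
    have := weyl_mono htA hBp.isHermitian hBptA i
    rwa [heig_tA] at this
  set b : Fin d → ℝ := hB.isHermitian.eigenvalues with hb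
  set bp : Fin d → ℝ := hBp.isHermitian.eigenvalues with hbp
  have hbppos : ∀ j, 0 < bp j := fun j => hBp.eigenvalues_pos j
  have hbpos : ∀ j, 0 < b j := fun j => hB.eigenvalues_pos j
  have hbpSpos : ∀ i, 0 < sortDesc bp i := fun i => hbppos _
  have hbSpos : ∀ i, 0 < sortDesc b i := fun i => hbpos _
  have haSpos : ∀ i, 0 < sortDesc a i := fun i => hapos _
  -- determinant identity
  have hprod : ∏ j, bp j = (∏ j, a j) * ∏ j, g j := by
    have h1 : (Matrix.det Bp : ℂ) = ∏ j, ((bp j : ℝ) : ℂ) :=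
      hBp.isHermitian.det_eq_prod_eigenvalues
    have h2 : Matrix.det Bp = Matrix.det Q * Matrix.det Cp * Matrix.det Q := by
      rw [hBpdef, det_mul, det_mul]
    have h3 : Matrix.det Cp = ∏ j, ((g j : ℝ) : ℂ) := by
      rw [hCp, det_conj_diag hUmem]
      rfl
    have h4 : (Matrix.det A : ℂ) = ∏ j, ((a j : ℝ) : ℂ) :=
      hA.isHermitian.det_eq_prod_eigenvalues
    have h5 : Matrix.det Q * Matrix.det Q = Matrix.det A := by rw [← det_mul, hQQ]
    have h6 : (∏ j, ((bp j : ℝ) : ℂ)) = (∏ j, ((a j : ℝ) : ℂ)) * ∏ j, ((g j : ℝ) : ℂ) := by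
      rw [← h1, ← h4, ← h3, h2]
      rw [mul_comm (Matrix.det Q) (Matrix.det Cp), mul_assoc, h5, mul_comm]
    have h7 : ((∏ j, bp j : ℝ) : ℂ) = (((∏ j, a j) * ∏ j, g j : ℝ) : ℂ) := by
      push_cast
      exact h6
    exact_mod_cast h7
  have hlogdet : ∑ j, Real.log (bp j) = ∑ j, Real.log (a j) + ∑ j, Real.log (g j) := by
    have h1 : Real.log (∏ j, bp j) = Real.log ((∏ j, a j) * ∏ j, g j) := by rw [hprod]
    rw [Real.log_prod (fun j _ => (hbppos j).ne'),
      Real.log_mul (Finset.prod_pos (fun j _ => hapos j)).ne'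
        (Finset.prod_pos (fun j _ => hgpos j)).ne',
      Real.log_prod (fun j _ => (hapos j).ne'),
      Real.log_prod (fun j _ => (hgpos j).ne')] at h1
    exact h1
  -- splitting the sum of logs of g
  have hsplit : ∑ j, Real.log (g j)
      = ∑ i ∈ Finset.Iic k, Real.log (μ i) + (d - (k.val+1) : ℕ) * Real.log t := by
    have h1 : ∑ j, Real.log (g j) = ∑ i, Real.log (max (μ i) t) := by
      have : ∀ i, Real.log (max (μ i) t) = (Real.log ∘ g) (descPerm x i) := by
        intro i
        rfl
      simp_rw [this]
      exact (Equiv.sum_comp (descPerm x) (Real.log ∘ g)).symm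
    rw [h1, ← Finset.sum_add_sum_compl (Finset.Iic k) (fun i => Real.log (max (μ i) t))]
    congr 1
    · apply Finset.sum_congr rfl
      intro i hi
      rw [max_eq_left (sortDesc_anti x (Finset.mem_Iic.mp hi))]
    · have h2 : ∀ i ∈ (Finset.Iic k)ᶜ, Real.log (max (μ i) t) = Real.log t := by
        intro i hi
        have hki : k ≤ i := le_of_lt (lt_of_not_ge (fun h => (Finset.mem_compl.mp hi) (Finset.mem_Iic.mpr h)))
        rw [max_eq_right (sortDesc_anti x hki)]
      rw [Finset.sum_congr rfl h2, Finset.sum_const, Finset.card_compl, Fin.card_Iic,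
        Fintype.card_fin, nsmul_eq_mul]
  -- the chain of inequalities
  have hcard : (S.card : ℝ) = (k.val : ℝ) + 1 := by rw [hS]; push_cast; ring
  have step1 : ∑ i ∈ S, (Real.log (sortDesc b i) - Real.log (sortDesc a i) - Real.log t)
      ≤ ∑ i ∈ S, (Real.log (sortDesc bp i) - Real.log (sortDesc a i) - Real.log t) := by
    apply Finset.sum_le_sum
    intro i _
    have := Real.log_le_log (hbSpos i) (e1 i)
    linarith
  have step2 : ∑ i ∈ S, (Real.log (sortDesc bp i) - Real.log (sortDesc a i) - Real.log t)
      ≤ ∑ i, (Real.log (sortDesc bp i) - Real.log (sortDesc a i) - Real.log t) := by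
    apply Finset.sum_le_sum_of_subset_of_nonneg (Finset.subset_univ S)
    intro i _ _
    have h1 : Real.log (t * sortDesc a i) ≤ Real.log (sortDesc bp i) :=
      Real.log_le_log (mul_pos ht (haSpos i)) (e2 i)
    rw [Real.log_mul ht.ne' (haSpos i).ne'] at h1
    linarith
  have step3 : ∑ i, (Real.log (sortDesc bp i) - Real.log (sortDesc a i) - Real.log t)
      = ∑ i ∈ Finset.Iic k, Real.log (μ i) + ((d - (k.val+1) : ℕ) : ℝ) * Real.log t
        - (d : ℝ) * Real.log t := by
    rw [Finset.sum_sub_distrib, Finset.sum_sub_distrib, sum_comp_sortDesc Real.log bp,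
      sum_comp_sortDesc Real.log a, hlogdet, Finset.sum_const, Finset.card_univ,
      Fintype.card_fin, nsmul_eq_mul, hsplit]
    ring
  have hd1 : ((d - (k.val+1) : ℕ) : ℝ) = (d : ℝ) - ((k.val : ℝ) + 1) := by
    have : k.val + 1 ≤ d := k.isLt
    push_cast [Nat.cast_sub this]
    ring
  have hsum_sub : ∑ i ∈ S, (Real.log (sortDesc b i) - Real.log (sortDesc a i) - Real.log t)
      = ∑ i ∈ S, (Real.log (sortDesc b i) - Real.log (sortDesc a i))
        - (S.card : ℝ) * Real.log t := by
    rw [Finset.sum_sub_distrib, Finset.sum_const, nsmul_eq_mul]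
  have := le_trans step1 step2
  rw [step3, hsum_sub, hd1, hcard] at this
  linarith

lemma sortDesc_inv_eig {A : Matrix (Fin d) (Fin d) ℂ} (hA : A.PosDef) (i : Fin d) :
    sortDesc (hA.inv).isHermitian.eigenvalues i = (sortAsc hA.isHermitian.eigenvalues i)⁻¹ := by
  classical
  set a : Fin d → ℝ := hA.isHermitian.eigenvalues with ha
  have hapos : ∀ j, 0 < a j := fun j => hA.eigenvalues_pos j
  set UA : Matrix (Fin d) (Fin d) ℂ := (hA.isHermitian.eigenvectorUnitary : Matrix (Fin d) (Fin d) ℂ) with hUA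
  have hUs : UA * star UA = 1 := mem_unitaryGroup_iff.mp hA.isHermitian.eigenvectorUnitary.2
  have hsU : star UA * UA = 1 := mem_unitaryGroup_iff'.mp hA.isHermitian.eigenvectorUnitary.2
  have hmid : Matrix.diagonal (Complex.ofReal ∘ fun j => (a j)⁻¹)
      * Matrix.diagonal (RCLike.ofReal ∘ hA.isHermitian.eigenvalues) = 1 := by
    rw [Matrix.diagonal_mul_diagonal]
    have h9 : (fun i => (Complex.ofReal ∘ fun j => (a j)⁻¹) i
        * (RCLike.ofReal ∘ hA.isHermitian.eigenvalues) i) = fun _ : Fin d => (1:ℂ) := by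
      funext j
      have hne : ((a j : ℝ) : ℂ) ≠ 0 := by exact_mod_cast (hapos j).ne'
      simp only [Function.comp_apply]
      rw [show ((RCLike.ofReal (hA.isHermitian.eigenvalues j)) : ℂ) = ((a j : ℝ) : ℂ) from rfl,
        Complex.ofReal_inv]
      exact inv_mul_cancel₀ hne
    rw [h9, Matrix.diagonal_one]
  have hform : A⁻¹ = UA * Matrix.diagonal (Complex.ofReal ∘ fun j => (a j)⁻¹) * star UA := by
    apply Matrix.inv_eq_left_inv
    conv_lhs => rw [hA.isHermitian.spectral_theorem, Unitary.conjStarAlgAut_apply]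
    have hre : (UA * Matrix.diagonal (Complex.ofReal ∘ fun j => (a j)⁻¹) * star UA)
        * (UA * Matrix.diagonal (RCLike.ofReal ∘ hA.isHermitian.eigenvalues) * star UA)
        = UA * (Matrix.diagonal (Complex.ofReal ∘ fun j => (a j)⁻¹) * ((star UA * UA)
          * Matrix.diagonal (RCLike.ofReal ∘ hA.isHermitian.eigenvalues))) * star UA := by
      noncomm_ring
    rw [hre, hsU, one_mul, hmid, mul_one, hUs]
  have hM2 : (UA * Matrix.diagonal (Complex.ofReal ∘ fun j => (a j)⁻¹) * star UA).IsHermitian :=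
    hform ▸ (hA.inv).isHermitian
  have hperm := eig_perm hA.isHermitian.eigenvectorUnitary.2 (fun j => (a j)⁻¹) hM2
  have heq : (hA.inv).isHermitian.eigenvalues = hM2.eigenvalues := eig_eq_of_eq hform _ _
  rw [heq, sortDesc_eq_of_perm hperm]
  -- now : sortDesc (fun j => (a j)⁻¹) i = (sortAsc a i)⁻¹
  have h1 : sortAsc (fun j => (a j)⁻¹) = (fun j => (a j)⁻¹) ∘ (descPerm a) := by
    apply sortAsc_eq_of_monotone
    intro p q hpq
    have h2 : sortDesc a q ≤ sortDesc a p := sortDesc_anti a hpq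
    have h3 : 0 < sortDesc a q := hapos _
    exact inv_anti₀ h3 h2
  rw [sortDesc_eq_sortAsc, h1]
  show (sortDesc a i.rev)⁻¹ = _
  rw [sortDesc_eq_sortAsc, Fin.rev_rev]

end GNL

/-- Gelfand–Naimark–Lidskii: `B * A⁻¹` has positive real eigenvalues and
`log λ↓(B) - log λ↓(A) ≺ log λ(B * A⁻¹) ≺ log λ↓(B) - log λ↑(A)`. -/
theorem gnl_log_majorization_quotient (d : ℕ) (A B : Matrix (Fin d) (Fin d) ℂ)
    (hA : A.PosDef) (hB : B.PosDef) :
    ∃ μ : Fin d → ℝ, (∀ i, 0 < μ i) ∧ Antitone μ ∧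
      (B * A⁻¹).charpoly = ∏ i, (X - C (μ i : ℂ)) ∧
      Majorizes
        (fun i => Real.log (sortDesc hB.isHermitian.eigenvalues i)
          - Real.log (sortDesc hA.isHermitian.eigenvalues i))
        (fun i => Real.log (μ i)) ∧
      Majorizes (fun i => Real.log (μ i))
        (fun i => Real.log (sortDesc hB.isHermitian.eigenvalues i)
          - Real.log (sortAsc hA.isHermitian.eigenvalues i)) := by
  classical
  set Q : Matrix (Fin d) (Fin d) ℂ := (open scoped MatrixOrder in CFC.sqrt A) with hQdef
  have hQPSD : Q.PosSemidef := (open scoped MatrixOrder in (CFC.sqrt_nonneg A).posSemidef)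
  have hQQ : Q * Q = A := (open scoped MatrixOrder in CFC.sqrt_mul_sqrt_self A hA.posSemidef.nonneg)
  have hAdet : IsUnit A.det := hA.isUnit.map (Matrix.detMonoidHom)
  have hQdet : IsUnit Q.det := by
    have h1 : Q.det * Q.det = A.det := by rw [← Matrix.det_mul, hQQ]
    refine isUnit_iff_ne_zero.mpr (fun h => ?_)
    rw [h, mul_zero] at h1
    exact hAdet.ne_zero h1.symm
  set R : Matrix (Fin d) (Fin d) ℂ := Q⁻¹ with hRdef
  have hQR : Q * R = 1 := Matrix.mul_nonsing_inv Q hQdet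
  have hRQ : R * Q = 1 := Matrix.nonsing_inv_mul Q hQdet
  have hRPSD : R.PosSemidef := hQPSD.inv
  have hRH : R.IsHermitian := hRPSD.1
  have hRR : R * R = A⁻¹ := by rw [hRdef, ← Matrix.mul_inv_rev, hQQ]
  have hRdet : IsUnit R.det := IsUnit.of_mul_eq_one Q.det (by rw [← Matrix.det_mul, hRQ, Matrix.det_one])
  set Cm : Matrix (Fin d) (Fin d) ℂ := R * B * R with hCmdef
  have hC : Cm.PosDef := GNL.posDef_conj hB hRH hRdet
  have hQCQ : Q * Cm * Q = B := by
    rw [hCmdef]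
    calc Q * (R * B * R) * Q = (Q * R) * B * (R * Q) := by noncomm_ring
      _ = B := by rw [hQR, hRQ, one_mul, mul_one]
  set μ : Fin d → ℝ := sortDesc hC.isHermitian.eigenvalues with hμdef
  have hμpos : ∀ i, 0 < μ i := fun i => hC.eigenvalues_pos _
  -- log-determinant identity
  have hkey : ∑ j, Real.log (hC.isHermitian.eigenvalues j)
      + ∑ j, Real.log (hA.isHermitian.eigenvalues j)
      = ∑ j, Real.log (hB.isHermitian.eigenvalues j) := by
    have h1 : (Matrix.det Cm : ℂ) = ∏ j, ((hC.isHermitian.eigenvalues j : ℝ) : ℂ) :=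
      hC.isHermitian.det_eq_prod_eigenvalues
    have h2 : (Matrix.det A : ℂ) = ∏ j, ((hA.isHermitian.eigenvalues j : ℝ) : ℂ) :=
      hA.isHermitian.det_eq_prod_eigenvalues
    have h3 : (Matrix.det B : ℂ) = ∏ j, ((hB.isHermitian.eigenvalues j : ℝ) : ℂ) :=
      hB.isHermitian.det_eq_prod_eigenvalues
    have h4 : Matrix.det Cm * Matrix.det A = Matrix.det B := by
      rw [hCmdef, Matrix.det_mul, Matrix.det_mul]
      have h5 : R.det * B.det * R.det * A.det = B.det * (R.det * R.det * A.det) := by ring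
      rw [h5, ← Matrix.det_mul, hRR, ← Matrix.det_mul, Matrix.nonsing_inv_mul A hAdet,
        Matrix.det_one, mul_one]
    have h6 : ((∏ j, hC.isHermitian.eigenvalues j) * ∏ j, hA.isHermitian.eigenvalues j : ℝ)
        = (∏ j, hB.isHermitian.eigenvalues j : ℝ) := by
      have h7 := h4
      rw [h1, h2, h3] at h7
      exact_mod_cast h7
    have h8 := congrArg Real.log h6
    rwa [Real.log_mul (Finset.prod_pos (fun j _ => hC.eigenvalues_pos j)).ne'
        (Finset.prod_pos (fun j _ => hA.eigenvalues_pos j)).ne',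
      Real.log_prod (fun j _ => (hC.eigenvalues_pos j).ne'),
      Real.log_prod (fun j _ => (hA.eigenvalues_pos j).ne'),
      Real.log_prod (fun j _ => (hB.eigenvalues_pos j).ne')] at h8
  have hμanti : Antitone (fun i => Real.log (μ i)) := by
    intro i j hij
    exact Real.log_le_log (hμpos _) (GNL.sortDesc_anti _ hij)
  refine ⟨μ, hμpos, GNL.sortDesc_anti _, ?_, ⟨?_, ?_⟩, ⟨?_, ?_⟩⟩
  · -- charpoly
    have hBA : B * A⁻¹ = Q * Cm * R := by
      rw [hCmdef, ← hRR]
      symm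
      calc Q * (R * B * R) * R = (Q * R) * (B * (R * R)) := by noncomm_ring
        _ = B * (R * R) := by rw [hQR, one_mul]
    rw [hBA, GNL.charpoly_conj hQR hRQ]
    have h1 : Cm.charpoly = ∏ j, (X - C ((hC.isHermitian.eigenvalues j : ℝ) : ℂ)) := by
      conv_lhs => rw [hC.isHermitian.spectral_theorem, Unitary.conjStarAlgAut_apply]
      rw [GNL.charpoly_conj (Matrix.mem_unitaryGroup_iff.mp hC.isHermitian.eigenvectorUnitary.2)
        (Matrix.mem_unitaryGroup_iff'.mp hC.isHermitian.eigenvectorUnitary.2), GNL.charpoly_diag]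
      rfl
    rw [h1]
    exact (Equiv.prod_comp (GNL.descPerm hC.isHermitian.eigenvalues)
      (fun j => X - C ((hC.isHermitian.eigenvalues j : ℝ) : ℂ))).symm
  · -- first submajorization
    intro k
    rw [GNL.sortDesc_of_antitone hμanti]
    obtain ⟨T, hTcard, hTeq⟩ := GNL.sortDesc_sum_eq_subset
      (fun i => Real.log (sortDesc hB.isHermitian.eigenvalues i)
        - Real.log (sortDesc hA.isHermitian.eigenvalues i)) k
    rw [hTeq]
    exact GNL.gnl_core hA hB hC hQPSD.1 hQCQ hQQ k T hTcard
  · -- first sum equality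
    rw [Finset.sum_sub_distrib, GNL.sum_comp_sortDesc Real.log hB.isHermitian.eigenvalues,
      GNL.sum_comp_sortDesc Real.log hA.isHermitian.eigenvalues,
      GNL.sum_comp_sortDesc Real.log hC.isHermitian.eigenvalues]
    linarith [hkey]
  · -- second submajorization
    intro k
    rw [GNL.sortDesc_of_antitone hμanti]
    have hmid := GNL.gnl_core hA.inv hC hB hRH hCmdef.symm hRR k (Finset.Iic k)
      (by rw [Fin.card_Iic])
    have hrw : ∀ i, Real.log (sortDesc (hA.inv).isHermitian.eigenvalues i)
        = - Real.log (sortAsc hA.isHermitian.eigenvalues i) := by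
      intro i
      rw [GNL.sortDesc_inv_eig hA, Real.log_inv]
    have h2 : ∑ i ∈ Finset.Iic k, Real.log (μ i)
        ≤ ∑ i ∈ Finset.Iic k, (Real.log (sortDesc hB.isHermitian.eigenvalues i)
          - Real.log (sortAsc hA.isHermitian.eigenvalues i)) := by
      have h3 : ∑ i ∈ Finset.Iic k, (Real.log (sortDesc hC.isHermitian.eigenvalues i)
          - Real.log (sortDesc (hA.inv).isHermitian.eigenvalues i))
          = ∑ i ∈ Finset.Iic k, (Real.log (μ i)
            + Real.log (sortAsc hA.isHermitian.eigenvalues i)) := by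
        apply Finset.sum_congr rfl
        intro i _
        rw [hrw i]
        ring
      rw [h3] at hmid
      rw [Finset.sum_add_distrib] at hmid
      rw [Finset.sum_sub_distrib]
      linarith [hmid]
    refine h2.trans ?_
    exact GNL.sum_subset_le_sortDesc _ k (Finset.Iic k) (by rw [Fin.card_Iic])
  · -- second sum equality
    rw [Finset.sum_sub_distrib, GNL.sum_comp_sortDesc Real.log hB.isHermitian.eigenvalues,
      GNL.sum_comp_sortAsc Real.log hA.isHermitian.eigenvalues,
      GNL.sum_comp_sortDesc Real.log hC.isHermitian.eigenvalues]
    linarith [hkey]
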